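/- arXiv:2210.02920 — 4 statements merged into one kernel-verified Lean document; each statement's English description precedes it below -/
import Mathlib

section
/- Under the change of variables X(ξ) = m ξ^{-2} f(ξ)^{m-1}, Y(ξ) = m ξ^{-1} f(ξ)^{m-2} f'(ξ), and η(ξ) = (1/m)∫_0^ξ ζ / f^{m-1}(ζ) dζ, a positive C² solution f of the profile ODE (f^m)'' + ((N-1)/ξ)(f^m)' - α f + β ξ f' + ξ^{σ} f^p = 0 with σ = -2(p-1)/(m-1) gives rise to a solution (X,Y) of the autonomous system dX/dη = X[(m-1)Y - 2X], dY/dη = -Y² - βY + αX - NXY - m^{(1-p)/(m-1)} X^{(m+p-2)/(m-1)}. -/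
open Real

/-- The change of variables `X(ξ) = m ξ^{-2} f(ξ)^{m-1}`,
`Y(ξ) = m ξ^{-1} f(ξ)^{m-2} f'(ξ)`, `dη/dξ = ξ/(m f(ξ)^{m-1})` maps positive
`C²` solutions of the profile ODE to solutions of the autonomous system
`X' = X[(m-1)Y - 2X]`, `Y' = -Y² - βY + αX - NXY - m^{(1-p)/(m-1)} X^{(m+p-2)/(m-1)}`
(the equations being written here in the `ξ` variable via the chain rule). -/
theorem stmt_4 (N : ℕ) (hN : 1 ≤ N) (m p σ α β : ℝ)
    (hm : 1 < m) (hp1 : 1 < p) (hpm : p < m)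
    (hσ : σ = -2 * (p - 1) / (m - 1))
    (f : ℝ → ℝ) (hfpos : ∀ ξ > 0, 0 < f ξ)
    (hf : ContDiffOn ℝ 2 f (Set.Ioi 0))
    (hODE : ∀ ξ > (0 : ℝ),
      deriv (deriv fun s => f s ^ m) ξ
          + ((N : ℝ) - 1) / ξ * deriv (fun s => f s ^ m) ξ
          - α * f ξ + β * ξ * deriv f ξ + ξ ^ σ * f ξ ^ p = 0)
    (X Y : ℝ → ℝ)
    (hX : ∀ ξ, X ξ = m * ξ ^ (-2 : ℝ) * f ξ ^ (m - 1))
    (hY : ∀ ξ, Y ξ = m * ξ ^ (-1 : ℝ) * f ξ ^ (m - 2) * deriv f ξ) :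
    ∀ ξ > (0 : ℝ),
      deriv X ξ * (m * f ξ ^ (m - 1) / ξ) = X ξ * ((m - 1) * Y ξ - 2 * X ξ) ∧
      deriv Y ξ * (m * f ξ ^ (m - 1) / ξ) =
        -(Y ξ) ^ 2 - β * Y ξ + α * X ξ - N * X ξ * Y ξ
          - m ^ ((1 - p) / (m - 1)) * X ξ ^ ((m + p - 2) / (m - 1)) := by
  intro ξ hξ
  have hm0 : (0:ℝ) < m := by linarith
  have hm1 : m - 1 ≠ 0 := by nlinarith
  have hF : 0 < f ξ := hfpos ξ hξ
  have hξ0 : ξ ≠ 0 := ne_of_gt hξ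
  -- differentiability of f on Ioi 0
  have hfd : DifferentiableOn ℝ f (Set.Ioi 0) := hf.differentiableOn (by norm_num)
  have hdf : ∀ s ∈ Set.Ioi (0:ℝ), HasDerivAt f (deriv f s) s := fun s hs =>
    (hfd.differentiableAt (isOpen_Ioi.mem_nhds hs)).hasDerivAt
  have hf' : ContDiffOn ℝ 1 (deriv f) (Set.Ioi 0) :=
    hf.deriv_of_isOpen isOpen_Ioi (by norm_num)
  have hdf2 : HasDerivAt (deriv f) (deriv (deriv f) ξ) ξ :=
    ((hf'.differentiableOn (by norm_num)).differentiableAt (isOpen_Ioi.mem_nhds hξ)).hasDerivAt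
  set b := deriv f ξ with hb
  set c := deriv (deriv f) ξ with hcdef
  -- derivative of f^m near ξ
  have hgd : ∀ s ∈ Set.Ioi (0:ℝ),
      HasDerivAt (fun t => f t ^ m) (deriv f s * m * f s ^ (m-1)) s := fun s hs =>
    (hdf s hs).rpow_const (Or.inl (ne_of_gt (hfpos s hs)))
  have hgev : (fun s => deriv (fun t => f t ^ m) s)
      =ᶠ[nhds ξ] (fun s => deriv f s * m * f s ^ (m-1)) := by
    filter_upwards [isOpen_Ioi.mem_nhds hξ] with s hs
    exact (hgd s hs).deriv
  -- derivative of the rewritten first derivative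
  have hgd2 : HasDerivAt (fun s => deriv f s * m * f s ^ (m-1))
      ((c * m) * (f ξ ^ (m-1)) + (b * m) * (b * (m-1) * f ξ ^ (m-1-1))) ξ := by
    exact (hdf2.mul_const m).mul ((hdf ξ hξ).rpow_const (Or.inl (ne_of_gt hF)))
  have hE := hODE ξ hξ
  rw [hgev.deriv_eq, hgd2.deriv, (hgd ξ hξ).deriv] at hE
  -- derivative of X
  have hXd : HasDerivAt X
      ((m * (-2 * ξ ^ (-2-1:ℝ))) * f ξ ^ (m-1) + (m * ξ ^ (-2:ℝ)) * (b * (m-1) * f ξ ^ (m-1-1))) ξ := by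
    have h1 : HasDerivAt (fun s : ℝ => m * s ^ (-2:ℝ)) (m * (-2 * ξ ^ (-2-1:ℝ))) ξ := by
      simpa [mul_comm] using (Real.hasDerivAt_rpow_const (p := (-2:ℝ)) (Or.inl hξ0)).const_mul m
    have h2 : HasDerivAt (fun s => f s ^ (m-1)) (b * (m-1) * f ξ ^ (m-1-1)) ξ :=
      (hdf ξ hξ).rpow_const (Or.inl (ne_of_gt hF))
    have := h1.mul h2
    refine HasDerivAt.congr_of_eventuallyEq this ?_
    filter_upwards with s using hX s
  -- derivative of Y
  have hYd : HasDerivAt Y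
      (((m * (-1 * ξ ^ (-1-1:ℝ))) * f ξ ^ (m-2) + (m * ξ ^ (-1:ℝ)) * (b * (m-2) * f ξ ^ (m-2-1))) * b
        + (m * ξ ^ (-1:ℝ) * f ξ ^ (m-2)) * c) ξ := by
    have h1 : HasDerivAt (fun s : ℝ => m * s ^ (-1:ℝ)) (m * (-1 * ξ ^ (-1-1:ℝ))) ξ := by
      simpa [mul_comm] using (Real.hasDerivAt_rpow_const (p := (-1:ℝ)) (Or.inl hξ0)).const_mul m
    have h2 : HasDerivAt (fun s => f s ^ (m-2)) (b * (m-2) * f ξ ^ (m-2-1)) ξ :=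
      (hdf ξ hξ).rpow_const (Or.inl (ne_of_gt hF))
    have := (h1.mul h2).mul hdf2
    refine HasDerivAt.congr_of_eventuallyEq this ?_
    filter_upwards with s using hY s
  -- rpow simplifications
  have hF0 : f ξ ≠ 0 := ne_of_gt hF
  have e1 : f ξ ^ (m-1-1) = f ξ ^ (m-1) / f ξ := by
    rw [Real.rpow_sub hF, Real.rpow_one]
  have e2 : f ξ ^ (m-2) = f ξ ^ (m-1) / f ξ := by
    rw [show m-2 = m-1-1 by ring, Real.rpow_sub hF, Real.rpow_one]
  have e3 : f ξ ^ (m-2-1) = f ξ ^ (m-1) / (f ξ * f ξ) := by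
    rw [show m-2-1 = m-1-2 by ring, Real.rpow_sub hF, Real.rpow_two, sq]
  have x1 : ξ ^ (-1:ℝ) = ξ⁻¹ := by rw [Real.rpow_neg_one]
  have x2 : ξ ^ (-2:ℝ) = (ξ*ξ)⁻¹ := by
    rw [show (-2:ℝ) = -(2:ℕ) by norm_num, Real.rpow_neg hξ.le, Real.rpow_natCast]; ring_nf
  have x3 : ξ ^ (-2-1:ℝ) = (ξ*ξ*ξ)⁻¹ := by
    rw [show (-2-1:ℝ) = -(3:ℕ) by norm_num, Real.rpow_neg hξ.le, Real.rpow_natCast]; ring_nf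
  have x11 : ξ ^ (-1-1:ℝ) = (ξ*ξ)⁻¹ := by
    rw [show (-1-1:ℝ) = -(2:ℕ) by norm_num, Real.rpow_neg hξ.le, Real.rpow_natCast]; ring_nf
  -- the nonlinear term
  have hlast : m ^ ((1 - p) / (m - 1)) * X ξ ^ ((m + p - 2) / (m - 1))
      = m * (ξ ^ σ * (ξ*ξ)⁻¹) * (f ξ ^ (m-1) / f ξ * f ξ ^ p) := by
    have hx2nn : (0:ℝ) ≤ ξ ^ (-2:ℝ) := Real.rpow_nonneg hξ.le _
    have hFnn : (0:ℝ) ≤ f ξ ^ (m-1) := Real.rpow_nonneg hF.le _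
    rw [hX ξ, Real.mul_rpow (by positivity) hFnn, Real.mul_rpow hm0.le hx2nn,
      ← Real.rpow_mul hξ.le, ← Real.rpow_mul hF.le,
      show (-2:ℝ)*((m+p-2)/(m-1)) = σ + -2 by rw [hσ]; field_simp; ring,
      show (m-1)*((m+p-2)/(m-1)) = (m-2) + p by field_simp; ring,
      show m ^ ((1 - p) / (m - 1)) *
          (m ^ ((m + p - 2) / (m - 1)) * ξ ^ (σ + -2) * f ξ ^ ((m-2) + p))
        = (m ^ ((1 - p) / (m - 1)) * m ^ ((m + p - 2) / (m - 1))) *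
          (ξ ^ (σ + -2) * f ξ ^ ((m-2) + p)) from by ring,
      ← Real.rpow_add hm0, show (1-p)/(m-1) + (m+p-2)/(m-1) = 1 by field_simp; ring,
      Real.rpow_one, Real.rpow_add hξ, Real.rpow_add hF, x2, e2]
    ring
  rw [← hb, e1] at hE
  constructor
  · rw [hXd.deriv, hX ξ, hY ξ, e1, e2, x1, x2, x3]
    field_simp
    ring
  · have hc : c = (α*f ξ - β*ξ*b - ξ^σ*f ξ^p
        - m*(m-1)*b^2*f ξ^(m-1)/f ξ - (↑N-1)*m*b*f ξ^(m-1)/ξ)/(m*f ξ^(m-1)) := by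
      field_simp at hE ⊢
      linear_combination hE
    rw [hYd.deriv, hlast, hX ξ, hY ξ, ← hb, e2, e3, x1, x2, x11, hc]
    field_simp
    ring
end

section
/- The first-order ODE f'(ξ) - (α/β) ξ^{-1} f(ξ) + (1/β) m^{(m+p-2)/(m-1)} ξ^{1-2(m+p-2)/(m-1)} f(ξ)^p = 0, with α/β = 2/(m-1), has the explicit family of solutions f(ξ) = (K + C(m,p,α)^{-(p-1)} log ξ)^{-1/(p-1)} ξ^{2/(m-1)} for constants K ∈ ℝ (on the interval where the bracket is positive), where C(m,p,α) = (α(m-1)/(2(p-1)))^{1/(p-1)} m^{-(m+p-2)/[(m-1)(p-1)]}. -/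
open Real

/-- The explicit functions `f(ξ) = (K + C^{-(p-1)} log ξ)^{-1/(p-1)} ξ^{2/(m-1)}`
solve the first-order ODE
`f' - (α/β) ξ⁻¹ f + (1/β) m^{(m+p-2)/(m-1)} ξ^{1-2(m+p-2)/(m-1)} f^p = 0`
on the interval where the bracket is positive, with
`C = (α(m-1)/(2(p-1)))^{1/(p-1)} m^{-(m+p-2)/[(m-1)(p-1)]}`. -/
theorem stmt_10 (m p α β : ℝ) (hm : 1 < m) (hp1 : 1 < p) (hpm : p < m)
    (hα : 0 < α) (hβ : β = (m - 1) * α / 2)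
    (C : ℝ)
    (hC : C = (α * (m - 1) / (2 * (p - 1))) ^ (1 / (p - 1))
      * m ^ (-(m + p - 2) / ((m - 1) * (p - 1))))
    (K : ℝ) (f : ℝ → ℝ)
    (hf : ∀ ξ > (0 : ℝ), f ξ =
      (K + C ^ (-(p - 1)) * Real.log ξ) ^ (-1 / (p - 1)) * ξ ^ (2 / (m - 1))) :
    ∀ ξ > (0 : ℝ), 0 < K + C ^ (-(p - 1)) * Real.log ξ →
      HasDerivAt f
        (α / β * ξ⁻¹ * f ξ
          - 1 / β * m ^ ((m + p - 2) / (m - 1))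
            * ξ ^ (1 - 2 * (m + p - 2) / (m - 1)) * f ξ ^ p) ξ := by
  intro ξ hξ hpos
  have hm1 : (0:ℝ) < m - 1 := by linarith
  have hp1' : (0:ℝ) < p - 1 := by linarith
  have hm0 : (0:ℝ) < m := by linarith
  have hβ0 : (0:ℝ) < β := by rw [hβ]; positivity
  set A := C ^ (-(p - 1)) with hA
  set q := -1 / (p - 1) with hq
  set r := 2 / (m - 1) with hr
  set M := m ^ ((m + p - 2) / (m - 1)) with hM
  have hMpos : (0:ℝ) < M := rpow_pos_of_pos hm0 _
  -- value of A
  have hXpos : (0:ℝ) < α * (m - 1) / (2 * (p - 1)) := by positivity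
  have hAval : A = (p - 1) / β * M := by
    rw [hA, hC, Real.mul_rpow (le_of_lt (rpow_pos_of_pos hXpos _))
      (le_of_lt (rpow_pos_of_pos hm0 _)),
      ← Real.rpow_mul hXpos.le, ← Real.rpow_mul hm0.le]
    have e1 : 1 / (p - 1) * -(p - 1) = -1 := by field_simp
    have e2 : -(m + p - 2) / ((m - 1) * (p - 1)) * -(p - 1) = (m + p - 2) / (m - 1) := by
      field_simp
    rw [e1, e2, Real.rpow_neg_one, hM, hβ]
    field_simp
  set u := K + A * Real.log ξ with hu
  -- derivatives
  have hud : HasDerivAt (fun x : ℝ => K + A * Real.log x) (A * ξ⁻¹) ξ :=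
    ((Real.hasDerivAt_log hξ.ne').const_mul A).const_add K
  have h1 : HasDerivAt (fun x : ℝ => (K + A * Real.log x) ^ q)
      (A * ξ⁻¹ * q * u ^ (q - 1)) ξ :=
    hud.rpow_const (Or.inl hpos.ne')
  have h2 : HasDerivAt (fun x : ℝ => x ^ r) (r * ξ ^ (r - 1)) ξ :=
    Real.hasDerivAt_rpow_const (Or.inl hξ.ne')
  have hg := h1.mul h2
  have hev : f =ᶠ[nhds ξ] fun x => (K + A * Real.log x) ^ q * x ^ r := by
    filter_upwards [Ioi_mem_nhds hξ] with x hx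
    exact hf x hx
  have hfinal := hg.congr_of_eventuallyEq hev
  refine hfinal.congr_deriv ?_
  symm
  have hfξ : f ξ = u ^ q * ξ ^ r := hf ξ hξ
  rw [hfξ]
  -- algebraic identities
  have hαβ : α / β = r := by rw [hβ, hr]; field_simp
  have hqA : A * q = -(1 / β) * M := by
    rw [hAval, hq]; field_simp
  have huq : u ^ (q - 1) = u ^ (q * p) := by
    congr 1
    rw [hq]; field_simp; ring
  have hfp : (u ^ q * ξ ^ r) ^ p = u ^ (q * p) * ξ ^ (r * p) := by
    rw [Real.mul_rpow (le_of_lt (rpow_pos_of_pos hpos _))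
      (le_of_lt (rpow_pos_of_pos hξ _)),
      ← Real.rpow_mul hpos.le, ← Real.rpow_mul hξ.le]
  have hξexp : ξ ^ (1 - 2 * (m + p - 2) / (m - 1)) * ξ ^ (r * p) = ξ ^ (r - 1) := by
    rw [← Real.rpow_add hξ]
    congr 1
    rw [hr]; field_simp; ring
  have hξr1 : ξ ^ (r - 1) = ξ ^ r * ξ⁻¹ := by
    rw [Real.rpow_sub hξ, Real.rpow_one, div_eq_mul_inv]
  rw [hfp, hαβ]
  calc r * ξ⁻¹ * (u ^ q * ξ ^ r)
        - 1 / β * M * ξ ^ (1 - 2 * (m + p - 2) / (m - 1)) * (u ^ (q * p) * ξ ^ (r * p))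
      = r * ξ⁻¹ * (u ^ q * ξ ^ r)
        - 1 / β * M * u ^ (q * p)
          * (ξ ^ (1 - 2 * (m + p - 2) / (m - 1)) * ξ ^ (r * p)) := by ring
    _ = A * ξ⁻¹ * q * u ^ (q - 1) * ξ ^ r + u ^ q * (r * ξ ^ (r - 1)) := by
        rw [hξexp, huq, hξr1]
        have : -(1 / β) * M = A * q := hqA.symm
        rw [show (1:ℝ) / β * M = -(A * q) by rw [← this]; ring]
        ring
end

section
/- In the system dy/dτ = -(N-2)y - my² - m^{(1-p)/(m-1)} w, dw/dτ = (2(m-p)/(m-1)) w - (m-p) y w (the limit system as α → 0), the region D = {(y,w) : y < 0, m^{-(m+p-2)/(m-1)} w > max(-y² - (N-2)y/m, 0)} is positively invariant: the flow on the boundary pieces {y = 0, w > 0} and the parabola arc w = m^{(m+p-2)/(m-1)}(-y² - (N-2)y/m) (for y ∈ (-(N-2)/m, 0)) points into D. -/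
open Real Set

/-- For the limit system (`α → 0`)
`y' = -(N-2)y - my² - m^{(1-p)/(m-1)} w`, `w' = (2(m-p)/(m-1))w - (m-p) y w`,
the region `D = {(y,w) : y < 0, m^{-(m+p-2)/(m-1)} w > max(-y² - (N-2)y/m, 0)}`
is positively invariant. -/
theorem stmt_13 (N : ℕ) (hN : 3 ≤ N) (m p : ℝ)
    (hm : 1 < m) (hp1 : 1 < p) (hpm : p < m)
    (D : Set (ℝ × ℝ))
    (hD : D = {q : ℝ × ℝ | q.1 < 0 ∧
      m ^ (-(m + p - 2) / (m - 1)) * q.2 >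
        max (-q.1 ^ 2 - ((N : ℝ) - 2) * q.1 / m) 0})
    (y w : ℝ → ℝ) (τ₀ : ℝ)
    (hsys : ∀ τ ≥ τ₀,
      HasDerivAt y (-((N : ℝ) - 2) * y τ - m * y τ ^ 2
        - m ^ ((1 - p) / (m - 1)) * w τ) τ ∧
      HasDerivAt w (2 * (m - p) / (m - 1) * w τ - (m - p) * y τ * w τ) τ)
    (hinit : (y τ₀, w τ₀) ∈ D) :
    ∀ τ ≥ τ₀, (y τ, w τ) ∈ D := by
  have hm0 : (0:ℝ) < m := lt_trans one_pos hm
  have hm1 : m - 1 ≠ 0 := by linarith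
  set c : ℝ := m ^ (-(m + p - 2) / (m - 1)) with hcdef
  have hc0 : 0 < c := Real.rpow_pos_of_pos hm0 _
  set u : ℝ → ℝ := fun t => c * w t with hudef
  set G : ℝ → ℝ := fun t => u t + y t ^ 2 + ((N:ℝ) - 2) * y t / m with hGdef
  set lam : ℝ → ℝ := fun t => 2 * (m - p) / (m - 1) - (m - p) * y t with hlamdef
  -- exponent identity : m ^ ((1-p)/(m-1)) = m * c
  have hexp : m ^ ((1 - p) / (m - 1)) = m * c := by
    have h1 : m * c = m ^ ((1:ℝ) + -(m + p - 2) / (m - 1)) := by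
      rw [Real.rpow_add hm0, Real.rpow_one]
    rw [h1]
    congr 1
    field_simp
    ring
  -- derivative facts
  have hy' : ∀ t, τ₀ ≤ t → HasDerivAt y (-(m * G t)) t := by
    intro t ht
    have h := (hsys t ht).1
    convert h using 1
    simp only [hGdef, hudef, hexp]
    field_simp
    ring
  have hu' : ∀ t, τ₀ ≤ t → HasDerivAt u (lam t * u t) t := by
    intro t ht
    have h : HasDerivAt u (c * _) t := ((hsys t ht).2).const_mul c
    convert h using 1
    simp only [hlamdef, hudef]
    ring
  have hG' : ∀ t, τ₀ ≤ t →
      HasDerivAt G (lam t * u t - (2 * m * y t + ((N:ℝ) - 2)) * G t) t := by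
    intro t ht
    have h1 := hu' t ht
    have h2 := hy' t ht
    have h3 : HasDerivAt (fun s => y s ^ 2) (2 * y t * (-(m * G t))) t := by
      have this : HasDerivAt (fun s => y s ^ 2) _ t := h2.pow 2
      convert this using 1
      ring
    have h4 : HasDerivAt (fun s => ((N:ℝ) - 2) * y s / m)
        (((N:ℝ) - 2) * (-(m * G t)) / m) t := (h2.const_mul _).div_const m
    have this : HasDerivAt G _ t := (h1.add h3).add h4
    convert this using 1
    field_simp
    ring
  -- initial conditions
  have hyinit : y τ₀ < 0 := by rw [hD] at hinit; exact hinit.1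
  have huinit : 0 < u τ₀ := by
    rw [hD] at hinit
    exact lt_of_le_of_lt (le_max_right _ _) hinit.2
  have hGinit : 0 < G τ₀ := by
    rw [hD] at hinit
    have := lt_of_le_of_lt (le_max_left _ _) hinit.2
    simp only [hGdef, hudef]
    simp only [hudef] at this
    nlinarith [this]
  -- main loop over T
  intro T hT
  -- continuity on Icc τ₀ T
  have hycont : ContinuousOn y (Icc τ₀ T) := fun t ht =>
    ((hsys t ht.1).1.continuousAt).continuousWithinAt
  have hucont : ContinuousOn u (Icc τ₀ T) := fun t ht =>
    (((hsys t ht.1).2.continuousAt).const_smul c).continuousWithinAt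
  have hGcont : ContinuousOn G (Icc τ₀ T) := by
    apply (hucont.add (hycont.pow 2)).add
    exact ((hycont.const_smul ((N:ℝ) - 2)).div_const m)
  -- Step A : u > 0 on Icc τ₀ T
  have hupos : ∀ t ∈ Icc τ₀ T, 0 < u t := by
    by_contra hcon
    push_neg at hcon
    obtain ⟨t₁, ht₁, ht₁u⟩ := hcon
    -- get a zero of u
    have hzero : ∃ τ₁ ∈ Icc τ₀ t₁, u τ₁ = 0 := by
      have hsub : Icc τ₀ t₁ ⊆ Icc τ₀ T := Icc_subset_Icc le_rfl ht₁.2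
      have := intermediate_value_Icc' ht₁.1 (hucont.mono hsub)
      have h0 : (0:ℝ) ∈ Icc (u t₁) (u τ₀) := ⟨ht₁u, le_of_lt huinit⟩
      obtain ⟨τ₁, hm1, hm2⟩ := this h0
      exact ⟨τ₁, hm1, hm2⟩
    obtain ⟨τ₁, hτ₁mem, hτ₁u⟩ := hzero
    -- Gronwall backward from τ₁ to τ₀
    set L : ℝ := τ₁ - τ₀ with hLdef
    have hL0 : 0 ≤ L := by simp [hLdef]; linarith [hτ₁mem.1]
    have hsub2 : Icc τ₀ τ₁ ⊆ Icc τ₀ T := Icc_subset_Icc le_rfl (le_trans hτ₁mem.2 ht₁.2)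
    -- bound on lam on Icc τ₀ τ₁
    have hlamcont : ContinuousOn lam (Icc τ₀ τ₁) := by
      apply ContinuousOn.sub continuousOn_const
      exact (hycont.mono hsub2).const_smul (m - p)
    obtain ⟨K, hK⟩ := (isCompact_Icc).exists_bound_of_continuousOn hlamcont
    set f : ℝ → ℝ := fun s => u (τ₁ - s) with hfdef
    have hmap : ∀ s ∈ Icc (0:ℝ) L, τ₁ - s ∈ Icc τ₀ τ₁ := by
      intro s hs
      constructor <;> simp [hLdef] at hs ⊢ <;> linarith [hs.1, hs.2, hτ₁mem.1]
    have hfcont : ContinuousOn f (Icc 0 L) := by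
      apply ((hucont.mono hsub2).comp (by fun_prop : ContinuousOn (fun s : ℝ => τ₁ - s) (Icc 0 L)))
      intro s hs
      exact hmap s hs
    have hf' : ∀ s ∈ Ico (0:ℝ) L,
        HasDerivWithinAt f (-(lam (τ₁ - s) * u (τ₁ - s))) (Ici s) s := by
      intro s hs
      have hmem : τ₀ ≤ τ₁ - s := (hmap s ⟨hs.1, le_of_lt hs.2⟩).1
      have hinner : HasDerivAt (fun s : ℝ => τ₁ - s) (-1) s := by
        simpa using (hasDerivAt_id s).const_sub τ₁
      have := (hu' (τ₁ - s) hmem).comp s hinner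
      have h2 : HasDerivAt f (lam (τ₁ - s) * u (τ₁ - s) * (-1)) s := this
      have h3 : HasDerivAt f (-(lam (τ₁ - s) * u (τ₁ - s))) s := by
        convert h2 using 1; ring
      exact h3.hasDerivWithinAt
    have hbound : ∀ s ∈ Ico (0:ℝ) L,
        ‖-(lam (τ₁ - s) * u (τ₁ - s))‖ ≤ K * ‖f s‖ + 0 := by
      intro s hs
      have hmem := hmap s ⟨hs.1, le_of_lt hs.2⟩
      have h1 : ‖-(lam (τ₁ - s) * u (τ₁ - s))‖ = ‖lam (τ₁ - s)‖ * ‖u (τ₁ - s)‖ := by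
        rw [norm_neg, norm_mul]
      rw [h1, add_zero]
      exact mul_le_mul_of_nonneg_right (hK _ hmem) (norm_nonneg _)
    have hf0 : ‖f 0‖ ≤ 0 := by simp [hfdef, hτ₁u]
    have := norm_le_gronwallBound_of_norm_deriv_right_le hfcont hf' hf0 hbound L
      ⟨hL0, le_rfl⟩
    rw [gronwallBound_ε0_δ0] at this
    have hfL : f L = u τ₀ := by simp [hfdef, hLdef]
    rw [hfL] at this
    rw [Real.norm_eq_abs] at this
    have h := le_abs_self (u τ₀)
    linarith
  -- Step B : G > 0 on Icc τ₀ T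
  have hGpos : ∀ t ∈ Icc τ₀ T, 0 < G t := by
    by_contra hcon
    push_neg at hcon
    obtain ⟨t₁, ht₁, ht₁G⟩ := hcon
    -- get a zero of G, then the first zero
    set S : Set ℝ := {t ∈ Icc τ₀ T | G t = 0} with hSdef
    have hSne : S.Nonempty := by
      have hsub : Icc τ₀ t₁ ⊆ Icc τ₀ T := Icc_subset_Icc le_rfl ht₁.2
      have := intermediate_value_Icc' ht₁.1 (hGcont.mono hsub)
      obtain ⟨z, hz1, hz2⟩ := this ⟨ht₁G, le_of_lt hGinit⟩
      exact ⟨z, hsub hz1, hz2⟩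
    have hSclosed : IsClosed S := by
      have h := hGcont.preimage_isClosed_of_isClosed isClosed_Icc (isClosed_singleton (x := (0:ℝ)))
      convert h using 1
      rfl
    have hSbdd : BddBelow S := ⟨τ₀, fun t ht => ht.1.1⟩
    set τ₁ : ℝ := sInf S with hτ₁def
    have hτ₁S : τ₁ ∈ S := hSclosed.csInf_mem hSne hSbdd
    have hτ₁G : G τ₁ = 0 := hτ₁S.2
    have hτ₁mem : τ₁ ∈ Icc τ₀ T := hτ₁S.1
    have hτ₀lt : τ₀ < τ₁ := by
      rcases lt_or_eq_of_le hτ₁mem.1 with h | h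
      · exact h
      · exact absurd (h ▸ hτ₁G) (ne_of_gt hGinit)
    -- G > 0 on Ico τ₀ τ₁
    have hGpos' : ∀ t ∈ Ico τ₀ τ₁, 0 < G t := by
      intro t ht
      by_contra hle
      push_neg at hle
      have hsub : Icc τ₀ t ⊆ Icc τ₀ T := Icc_subset_Icc le_rfl (le_trans (le_of_lt ht.2) hτ₁mem.2)
      obtain ⟨z, hz1, hz2⟩ := intermediate_value_Icc' ht.1 (hGcont.mono hsub) ⟨hle, le_of_lt hGinit⟩
      have hzS : z ∈ S := ⟨hsub hz1, hz2⟩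
      have := csInf_le hSbdd hzS
      have : τ₁ ≤ t := le_trans this hz1.2
      exact absurd ht.2 (not_lt.2 this)
    -- y is antitone on Icc τ₀ τ₁
    have hsub2 : Icc τ₀ τ₁ ⊆ Icc τ₀ T := Icc_subset_Icc le_rfl hτ₁mem.2
    have hyanti : AntitoneOn y (Icc τ₀ τ₁) := by
      apply antitoneOn_of_deriv_nonpos (convex_Icc τ₀ τ₁) (hycont.mono hsub2)
      · intro t ht
        rw [interior_Icc] at ht
        exact ((hy' t (le_of_lt ht.1)).differentiableAt).differentiableWithinAt
      · intro t ht
        rw [interior_Icc] at ht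
        rw [(hy' t (le_of_lt ht.1)).deriv]
        have := hGpos' t ⟨le_of_lt ht.1, ht.2⟩
        nlinarith
    have hyτ₁ : y τ₁ < 0 :=
      lt_of_le_of_lt (hyanti ⟨le_rfl, le_of_lt hτ₀lt⟩ ⟨le_of_lt hτ₀lt, le_rfl⟩ (le_of_lt hτ₀lt)) hyinit
    -- positive derivative of G at τ₁
    have hlampos : 0 < lam τ₁ := by
      simp only [hlamdef]
      have h1 : 0 < 2 * (m - p) / (m - 1) := div_pos (by linarith) (by linarith)
      nlinarith
    have huτ₁ : 0 < u τ₁ := hupos τ₁ hτ₁mem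
    set d : ℝ := lam τ₁ * u τ₁ - (2 * m * y τ₁ + ((N:ℝ) - 2)) * G τ₁ with hddef
    have hd0 : 0 < d := by rw [hddef, hτ₁G]; nlinarith
    have hGd : HasDerivAt G d τ₁ := hG' τ₁ hτ₁mem.1
    -- slope argument from the left
    have hslope := hasDerivAt_iff_tendsto_slope.1 hGd
    have hslope' : Filter.Tendsto (slope G τ₁) (nhdsWithin τ₁ (Iio τ₁)) (nhds d) :=
      hslope.mono_left (nhdsWithin_mono τ₁ (fun x hx => ne_of_lt hx))
    have hev : ∀ᶠ t in nhdsWithin τ₁ (Iio τ₁), 0 < slope G τ₁ t :=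
      hslope' (Ioi_mem_nhds hd0)
    have hev2 : ∀ᶠ t in nhdsWithin τ₁ (Iio τ₁), t ∈ Ioo τ₀ τ₁ :=
      Ioo_mem_nhdsLT_of_mem ⟨hτ₀lt, le_rfl⟩
    have : ∃ t, 0 < slope G τ₁ t ∧ t ∈ Ioo τ₀ τ₁ := by
      rcases (hev.and hev2).exists with ⟨t, h1, h2⟩
      exact ⟨t, h1, h2⟩
    obtain ⟨t, hst, htmem⟩ := this
    have hGt : 0 < G t := hGpos' t ⟨le_of_lt htmem.1, htmem.2⟩
    rw [slope_def_field, hτ₁G] at hst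
    rcases div_pos_iff.1 hst with ⟨h1, h2⟩ | ⟨h1, h2⟩ <;> linarith [htmem.2, hGt]
  -- Step C : y T < 0
  have hyanti : AntitoneOn y (Icc τ₀ T) := by
    apply antitoneOn_of_deriv_nonpos (convex_Icc τ₀ T) hycont
    · intro t ht
      rw [interior_Icc] at ht
      exact ((hy' t (le_of_lt ht.1)).differentiableAt).differentiableWithinAt
    · intro t ht
      rw [interior_Icc] at ht
      rw [(hy' t (le_of_lt ht.1)).deriv]
      have := hGpos t ⟨le_of_lt ht.1, le_of_lt ht.2⟩
      nlinarith
  have hyT : y T < 0 := lt_of_le_of_lt (hyanti ⟨le_rfl, hT⟩ ⟨hT, le_rfl⟩ hT) hyinit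
  have huT : 0 < u T := hupos T ⟨hT, le_rfl⟩
  have hGT : 0 < G T := hGpos T ⟨hT, le_rfl⟩
  rw [hD]
  refine ⟨hyT, ?_⟩
  rw [gt_iff_lt, max_lt_iff]
  constructor
  · simp only [hGdef, hudef] at hGT ⊢
    nlinarith
  · exact huT
end

section
/- For the system dX/dη = X[(m-1)Y - 2X], dY/dη = -Y² - Y + (2/(m-1))X - NXY - c X^{(m+p-2)/(m-1)} with c = m^{(1-p)/(m-1)}/β^{(m-p)/(m-1)} > 0, the half-plane {(m-1)Y - 2X < 0} is positively invariant: on the line (m-1)Y = 2X with X > 0, the quantity H = (m-1)·(dY/dη) - 2·(dX/dη) satisfies H = -[(m-1) + N(m-1)²/2] Y² - (m-1) c X^{(m+p-2)/(m-1)} < 0. -/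
open Real

/-- For the system `X' = X[(m-1)Y - 2X]`,
`Y' = -Y² - Y + (2/(m-1))X - NXY - c X^{(m+p-2)/(m-1)}` with
`c = m^{(1-p)/(m-1)}/β^{(m-p)/(m-1)} > 0`, on the line `(m-1)Y = 2X`, `X > 0`,
the quantity `H = (m-1)·Y' - 2·X'` satisfies
`H = -[(m-1) + N(m-1)²/2] Y² - (m-1) c X^{(m+p-2)/(m-1)} < 0`; consequently the
half-plane `{(m-1)Y - 2X < 0}` is positively invariant for solutions with
`X ≥ 0`. -/
theorem stmt_15 (N : ℕ) (hN : 1 ≤ N) (m p β c : ℝ)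
    (hm : 1 < m) (hp1 : 1 < p) (hpm : p < m) (hβ : 0 < β)
    (hc : c = m ^ ((1 - p) / (m - 1)) / β ^ ((m - p) / (m - 1))) :
    (∀ X Y : ℝ, 0 < X → (m - 1) * Y = 2 * X →
      (m - 1) * (-Y ^ 2 - Y + 2 / (m - 1) * X - N * X * Y
          - c * X ^ ((m + p - 2) / (m - 1)))
        - 2 * (X * ((m - 1) * Y - 2 * X)) =
        -((m - 1) + (N : ℝ) * (m - 1) ^ 2 / 2) * Y ^ 2
          - (m - 1) * c * X ^ ((m + p - 2) / (m - 1)) ∧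
      (m - 1) * (-Y ^ 2 - Y + 2 / (m - 1) * X - N * X * Y
          - c * X ^ ((m + p - 2) / (m - 1)))
        - 2 * (X * ((m - 1) * Y - 2 * X)) < 0) ∧
    (∀ (X Y : ℝ → ℝ) (η₀ : ℝ),
      (∀ η ≥ η₀,
        HasDerivAt X (X η * ((m - 1) * Y η - 2 * X η)) η ∧
        HasDerivAt Y (-(Y η) ^ 2 - Y η + 2 / (m - 1) * X η - N * X η * Y η
          - c * X η ^ ((m + p - 2) / (m - 1))) η) →
      (∀ η ≥ η₀, 0 ≤ X η) →
      (m - 1) * Y η₀ - 2 * X η₀ < 0 →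
      ∀ η ≥ η₀, (m - 1) * Y η - 2 * X η < 0) := by
  have hm1 : (0:ℝ) < m - 1 := by linarith
  have hm0 : m - 1 ≠ 0 := ne_of_gt hm1
  have hcpos : 0 < c := by
    rw [hc]
    exact div_pos (rpow_pos_of_pos (by linarith) _) (rpow_pos_of_pos hβ _)
  constructor
  · intro X Y hX hline
    have hY : Y = 2 * X / (m - 1) := by
      field_simp
      linarith [hline]
    subst hY
    have heq : (m - 1) * (-(2 * X / (m - 1)) ^ 2 - 2 * X / (m - 1) + 2 / (m - 1) * X
          - N * X * (2 * X / (m - 1)) - c * X ^ ((m + p - 2) / (m - 1)))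
        - 2 * (X * ((m - 1) * (2 * X / (m - 1)) - 2 * X)) =
        -((m - 1) + (N : ℝ) * (m - 1) ^ 2 / 2) * (2 * X / (m - 1)) ^ 2
          - (m - 1) * c * X ^ ((m + p - 2) / (m - 1)) := by
      field_simp
      ring
    refine ⟨heq, ?_⟩
    rw [heq]
    have hZ : 0 < X ^ ((m + p - 2) / (m - 1)) := rpow_pos_of_pos hX _
    have hY2 : 0 < (2 * X / (m - 1)) ^ 2 := by positivity
    have hA : 0 < (m - 1) + (N : ℝ) * (m - 1) ^ 2 / 2 := by positivity
    nlinarith [mul_pos hA hY2, mul_pos (mul_pos hm1 hcpos) hZ]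
  · intro X Y η₀ hderiv hXnn hW0 η hη
    by_contra hcon
    push_neg at hcon
    set W : ℝ → ℝ := fun t => (m - 1) * Y t - 2 * X t with hWdef
    set S : Set ℝ := {t | η₀ ≤ t ∧ 0 ≤ W t} with hSdef
    have hSne : S.Nonempty := ⟨η, hη, hcon⟩
    have hSbdd : BddBelow S := ⟨η₀, fun t ht => ht.1⟩
    have hWcont : ContinuousOn W (Set.Ici η₀) := fun t ht =>
      (((hderiv t ht).2.const_mul (m-1)).sub ((hderiv t ht).1.const_mul 2)).continuousAt.continuousWithinAt
    have hSclosed : IsClosed S := by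
      have : S = Set.Ici η₀ ∩ W ⁻¹' (Set.Ici 0) := by
        ext t; simp [hSdef, Set.mem_setOf_eq]
      rw [this]
      exact hWcont.preimage_isClosed_of_isClosed isClosed_Ici isClosed_Ici
    set η₁ : ℝ := sInf S with hη₁def
    have hη₁S : η₁ ∈ S := hSclosed.csInf_mem hSne hSbdd
    have hη₀η₁ : η₀ ≤ η₁ := hη₁S.1
    have hWneg : ∀ t, η₀ ≤ t → t < η₁ → W t < 0 := by
      intro t ht1 ht2
      by_contra h
      push_neg at h
      exact absurd (csInf_le hSbdd ⟨ht1, h⟩) (not_le.2 ht2)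
    -- bound the linear coefficient on [η₀, η₁]
    set a : ℝ → ℝ := fun t => -1 - 2 * X t + (N:ℝ) * (m - 1) * Y t / 2 with hadef
    have hacont : ContinuousOn a (Set.Icc η₀ η₁) := by
      intro t ht
      have hXc := (hderiv t ht.1).1.continuousAt
      have hYc := (hderiv t ht.1).2.continuousAt
      exact (((continuousAt_const.sub (hXc.const_mul 2)).add
        (((hYc.const_mul ((N:ℝ) * (m - 1))).div_const 2)))).continuousWithinAt
    obtain ⟨K, hK⟩ := isCompact_Icc.exists_bound_of_continuousOn hacont
    -- W has derivative a·W - b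
    have hWD : ∀ t, η₀ ≤ t → HasDerivAt W
        ((m - 1) * (-(Y t) ^ 2 - Y t + 2 / (m - 1) * X t - N * X t * Y t
          - c * X t ^ ((m + p - 2) / (m - 1))) - 2 * (X t * ((m - 1) * Y t - 2 * X t))) t :=
      fun t ht => ((hderiv t ht).2.const_mul (m-1)).sub ((hderiv t ht).1.const_mul 2)
    -- key pointwise inequality on [η₀, η₁]
    have hkey : ∀ t ∈ Set.Icc η₀ η₁, W t ≤ 0 →
        (m - 1) * (-(Y t) ^ 2 - Y t + 2 / (m - 1) * X t - N * X t * Y t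
          - c * X t ^ ((m + p - 2) / (m - 1))) - 2 * (X t * ((m - 1) * Y t - 2 * X t))
          + K * W t ≤ 0 := by
      intro t ht hWt
      simp only [hWdef] at hWt
      have hb : 0 ≤ ((m - 1) + (N:ℝ) * (m - 1) ^ 2 / 2) * (Y t) ^ 2
          + (m - 1) * c * X t ^ ((m + p - 2) / (m - 1)) := by
        have hZ : 0 ≤ X t ^ ((m + p - 2) / (m - 1)) := rpow_nonneg (hXnn t ht.1) _
        positivity
      have haK : -K ≤ -1 - 2 * X t + (N:ℝ) * (m - 1) * Y t / 2 := by
        have h6 := hK t ht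
        simp only [hadef, Real.norm_eq_abs] at h6
        linarith [(abs_le.mp h6).1]
      have h4 : 0 ≤ ((-1 - 2 * X t + (N:ℝ) * (m - 1) * Y t / 2) + K)
          * (-((m - 1) * Y t - 2 * X t)) :=
        mul_nonneg (by linarith) (neg_nonneg.2 hWt)
      simp only [hWdef]
      have halg : (m - 1) * (-(Y t) ^ 2 - Y t + 2 / (m - 1) * X t - N * X t * Y t
          - c * X t ^ ((m + p - 2) / (m - 1))) - 2 * (X t * ((m - 1) * Y t - 2 * X t))
          + K * ((m - 1) * Y t - 2 * X t) =
          -(((-1 - 2 * X t + (N:ℝ) * (m - 1) * Y t / 2) + K)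
            * (-((m - 1) * Y t - 2 * X t)))
          - (((m - 1) + (N:ℝ) * (m - 1) ^ 2 / 2) * (Y t) ^ 2
          + (m - 1) * c * X t ^ ((m + p - 2) / (m - 1))) := by
        field_simp
        ring
      rw [halg]
      linarith
    -- V := W · exp(K·)
    set V : ℝ → ℝ := fun t => W t * Real.exp (K * t) with hVdef
    have hVD : ∀ t, η₀ ≤ t → HasDerivAt V
        (((m - 1) * (-(Y t) ^ 2 - Y t + 2 / (m - 1) * X t - N * X t * Y t
          - c * X t ^ ((m + p - 2) / (m - 1))) - 2 * (X t * ((m - 1) * Y t - 2 * X t))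
          + K * W t) * Real.exp (K * t)) t := by
      intro t ht
      have hexp : HasDerivAt (fun s => Real.exp (K * s)) (Real.exp (K * t) * K) t := by
        simpa using (HasDerivAt.exp ((hasDerivAt_id t).const_mul K))
      have := (hWD t ht).mul hexp
      exact this.congr_deriv (by ring)
    have hVcont : ContinuousOn V (Set.Icc η₀ η₁) := fun t ht =>
      (hVD t ht.1).continuousAt.continuousWithinAt
    have hVanti : AntitoneOn V (Set.Icc η₀ η₁) := by
      apply antitoneOn_of_deriv_nonpos (convex_Icc _ _) hVcont
      · intro t ht
        rw [interior_Icc] at ht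
        exact (hVD t ht.1.le).differentiableAt.differentiableWithinAt
      · intro t ht
        rw [interior_Icc] at ht
        rw [(hVD t ht.1.le).deriv]
        have hWt : W t ≤ 0 := (hWneg t ht.1.le ht.2).le
        exact mul_nonpos_of_nonpos_of_nonneg
          (hkey t ⟨ht.1.le, ht.2.le⟩ hWt) (Real.exp_pos _).le
    have h1 : V η₁ ≤ V η₀ := hVanti (Set.left_mem_Icc.2 hη₀η₁) (Set.right_mem_Icc.2 hη₀η₁) hη₀η₁
    have h2 : V η₀ < 0 := mul_neg_of_neg_of_pos hW0 (Real.exp_pos _)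
    have h3 : 0 ≤ V η₁ := mul_nonneg hη₁S.2 (Real.exp_pos _).le
    linarith
end
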